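/- Logical soundness of subtyping (monotonicity of type interpretation): for any types T₁, T₂ and any state (ρ,h,A), if T₁ ⊑ T₂ and ρ,h,A ⊨ T₁, then ρ,h,A ⊨ T₂. -/

import Mathlib

namespace SecureClones

abbrev Var := ℕ
abbrev Field := ℕ
abbrev Loc := ℕ
abbrev PolId := ℕ
abbrev Node := ℕ

/-- Values: locations or null. -/
inductive Val where
  | loc : Loc → Val
  | null : Val
deriving DecidableEq

abbrev Obj := Field → Val
abbrev Heap := Loc → Option Obj
abbrev Env := Var → Val

/-- An access path: a root variable followed by a sequence of fields. -/
structure Path where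
  root : Var
  fields : List Field
deriving DecidableEq

/-- Evaluation of a sequence of field dereferences from a value. -/
def evalFields (h : Heap) : Val → List Field → Option Val
  | v, [] => some v
  | Val.loc l, f :: fs =>
      match h l with
      | some o => evalFields h (o f) fs
      | none => none
  | Val.null, _ :: _ => none

/-- Concrete path evaluation ⟨ρ,h⟩π ⇓ v. -/
def EvalPath (ρ : Env) (h : Heap) (π : Path) (v : Val) : Prop :=
  evalFields h (ρ π.root) π.fields = some v

/-- Reachability in a heap: `Reach h v w` iff `w` is reachable from `v`
by a (possibly empty) sequence of field dereferences. -/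
inductive Reach (h : Heap) : Val → Val → Prop
  | refl (v) : Reach h v v
  | step {v : Val} {l : Loc} {o : Obj} (f : Field) :
      Reach h v (Val.loc l) → h l = some o → Reach h v (o f)

/-- A copy policy: a set of (policy identifier, deep field) pairs. -/
abbrev Pol := Set (PolId × Field)

/-- A field sequence follows only deep fields of a policy (w.r.t. policy map `Pm`). -/
inductive FieldsSat (Pm : PolId → Pol) : Pol → List Field → Prop
  | nil (τ) : FieldsSat Pm τ []
  | cons {τ : Pol} {fs : List Field} (X : PolId) (f : Field) :
      (X, f) ∈ τ → FieldsSat Pm (Pm X) fs → FieldsSat Pm τ (f :: fs)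

/-- ⊢ π : τ : the access path follows only deep fields of τ. -/
def PathSat (Pm : PolId → Pol) (π : Path) (τ : Pol) : Prop :=
  FieldsSat Pm τ π.fields

/-- Policy semantics ρ,h,x ⊨ τ. -/
def PolSem (Pm : PolId → Pol) (ρ : Env) (h : Heap) (x : Var) (τ : Pol) : Prop :=
  ∀ (π π' : Path) (l l' : Loc),
    π.root = x → π'.root ≠ x →
    PathSat Pm π τ →
    EvalPath ρ h π (Val.loc l) → EvalPath ρ h π' (Val.loc l') →
    l ≠ l'

/-- Base types of the type-and-effect system. -/
inductive BaseType where
  | node : Node → BaseType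
  | bot
  | topOut
  | top
deriving DecidableEq

abbrev Graph := Node → Option (Field → BaseType)

/-- A type (Γ,Δ,Θ). -/
structure Ty where
  Γ : Var → BaseType
  Δ : Graph
  Θ : Set Node

/-- Abstract evaluation of a field sequence from a base type, with ⊤, ⊤out as sinks. -/
def aevalFields (Δ : Graph) : BaseType → List Field → Option BaseType
  | t, [] => some t
  | BaseType.node n, f :: fs =>
      match Δ n with
      | some e => aevalFields Δ (e f) fs
      | none => none
  | BaseType.top, _ :: _ => some BaseType.top
  | BaseType.topOut, _ :: _ => some BaseType.topOut
  | BaseType.bot, _ :: _ => none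

/-- Abstract path evaluation [Γ,Δ]π ⇓ t. -/
def AEval (Γ : Var → BaseType) (Δ : Graph) (π : Path) (t : BaseType) : Prop :=
  aevalFields Δ (Γ π.root) π.fields = some t

/-- Auxiliary type interpretation [[v : t]]. -/
inductive AuxInterp (ρ : Env) (h : Heap) (A : Set Loc) (Γ : Var → BaseType) (Δ : Graph) :
    Val → BaseType → Prop
  | null (t) : AuxInterp ρ h A Γ Δ Val.null t
  | top (v) : AuxInterp ρ h A Γ Δ v BaseType.top
  | topOut (l : Loc) :
      (∀ l' : Loc, Reach h (Val.loc l) (Val.loc l') → l' ∉ A) →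
      AuxInterp ρ h A Γ Δ (Val.loc l) BaseType.topOut
  | node (l : Loc) (n : Node) :
      l ∈ A → (Δ n).isSome →
      (∀ π, EvalPath ρ h π (Val.loc l) → AEval Γ Δ π (BaseType.node n)) →
      AuxInterp ρ h A Γ Δ (Val.loc l) (BaseType.node n)

/-- Main type interpretation ρ,h,A ⊨ (Γ,Δ,Θ). -/
structure Interp (ρ : Env) (h : Heap) (A : Set Loc) (T : Ty) : Prop where
  paths : ∀ (π : Path) (t : BaseType) (v : Val),
    AEval T.Γ T.Δ π t → EvalPath ρ h π v → AuxInterp ρ h A T.Γ T.Δ v t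
  strong : ∀ n ∈ T.Θ, ∀ (π π' : Path) (l l' : Loc),
    AEval T.Γ T.Δ π (BaseType.node n) → AEval T.Γ T.Δ π' (BaseType.node n) →
    EvalPath ρ h π (Val.loc l) → EvalPath ρ h π' (Val.loc l') → l = l'

/-- Value sub-typing t ≤_σ t' (σ : Node → Option Node, none standing for ⊤). -/
inductive VSub (σ : Node → Option Node) : BaseType → BaseType → Prop
  | bot (t) : VSub σ BaseType.bot t
  | top {t : BaseType} : (∀ n, t ≠ BaseType.node n) → VSub σ t BaseType.top
  | topOut : VSub σ BaseType.topOut BaseType.topOut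
  | node {n n' : Node} : σ n = some n' → VSub σ (BaseType.node n) (BaseType.node n')
  | nodeTop {n : Node} : σ n = none → VSub σ (BaseType.node n) BaseType.top

/-- T₁ ⊑ T₂ via the fusion map σ. -/
structure SubtypeVia (T₁ T₂ : Ty) (σ : Node → Option Node) : Prop where
  st1 : ∀ n n', (T₁.Δ n).isSome → σ n = some n' → (T₂.Δ n').isSome
  st2 : ∀ (t₁ : BaseType) (π : Path), AEval T₁.Γ T₁.Δ π t₁ →
      ∃ t₂, VSub σ t₁ t₂ ∧ AEval T₂.Γ T₂.Δ π t₂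
  st3 : ∀ n₂ ∈ T₂.Θ, ∃ n₁ ∈ T₁.Θ,
      ∀ n, ((T₁.Δ n).isSome ∧ σ n = some n₂) ↔ n = n₁

/-- The sub-typing relation T₁ ⊑ T₂. -/
def TySub (T₁ T₂ : Ty) : Prop := ∃ σ, SubtypeVia T₁ T₂ σ

-- Successor base type of a policy node for field f: the node of the policy
-- governing f if f is deep, and ⊤ otherwise.
open Classical in
noncomputable def polEdge (τ : Pol) (f : Field) : BaseType :=
  if h : ∃ X, (X, f) ∈ τ then BaseType.node (h.choose + 1) else BaseType.top

/-- The graph part of Φ(τ): node 0 is the unfolded root n_τ, node X+1 is the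
node n'_X of policy identifier X. -/
noncomputable def PhiGraph (Pm : PolId → Pol) (τ : Pol) : Graph :=
  fun n =>
    match n with
    | 0 => some (polEdge τ)
    | m + 1 => some (polEdge (Pm m))

/-- The root node n_τ of Φ(τ). -/
def PhiRoot : Node := 0

/-- Heap update h[(l,f) ↦ v]. -/
def hupd (h : Heap) (l : Loc) (f : Field) (v : Val) : Heap :=
  fun l' => if l' = l then (h l).map (fun o => Function.update o f v) else h l'

/-- Graph update Δ[(n,f) ↦ t]. -/
def gupd (Δ : Graph) (n : Node) (f : Field) (t : BaseType) : Graph :=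
  fun m => if m = n then (Δ n).map (fun e => Function.update e f t) else Δ m


lemma evalFields_append (h : Heap) (v : Val) (fs gs : List Field) :
    evalFields h v (fs ++ gs) = (evalFields h v fs).bind (fun w => evalFields h w gs) := by
  induction fs generalizing v with
  | nil => simp [evalFields]
  | cons f fs ih =>
    cases v with
    | null => simp [evalFields]
    | loc l =>
      simp only [List.cons_append, evalFields]
      cases h l with
      | none => simp
      | some o => exact ih (o f)

lemma aevalFields_append (Δ : Graph) (t : BaseType) (fs gs : List Field) :
    aevalFields Δ t (fs ++ gs) = (aevalFields Δ t fs).bind (fun s => aevalFields Δ s gs) := by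
  induction fs generalizing t with
  | nil => simp [aevalFields]
  | cons f fs ih =>
    cases t with
    | node n =>
      simp only [List.cons_append, aevalFields]
      cases Δ n with
      | none => simp
      | some e => exact ih (e f)
    | bot => simp [aevalFields]
    | top => cases gs <;> simp [aevalFields]
    | topOut => cases gs <;> simp [aevalFields]

/-- Any concretely evaluable path is abstractly evaluable in an interpreted type. -/
lemma exists_aeval {ρ : Env} {h : Heap} {A : Set Loc} {T₁ : Ty}
    (hint : Interp ρ h A T₁) :
    ∀ (fs : List Field) (x : Var) (pre : List Field),
      (∃ t, AEval T₁.Γ T₁.Δ ⟨x, pre⟩ t) →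
      ∀ v, EvalPath ρ h ⟨x, pre ++ fs⟩ v →
      ∃ t, AEval T₁.Γ T₁.Δ ⟨x, pre ++ fs⟩ t := by
  intro fs
  induction fs with
  | nil => intro x pre hpre v _; simpa using hpre
  | cons f fs ih =>
    rintro x pre ⟨t, ht⟩ v hv
    have hv' := hv
    unfold EvalPath at hv'
    rw [evalFields_append] at hv'
    obtain ⟨w, hw, hwv⟩ := Option.bind_eq_some_iff.mp hv'
    have haux := hint.paths ⟨x, pre⟩ t w ht hw
    cases haux with
    | null _ => simp [evalFields] at hwv
    | top _ =>
      refine ⟨BaseType.top, ?_⟩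
      unfold AEval at ht ⊢
      rw [aevalFields_append, ht]
      simp [aevalFields]
    | topOut l hr =>
      refine ⟨BaseType.topOut, ?_⟩
      unfold AEval at ht ⊢
      rw [aevalFields_append, ht]
      simp [aevalFields]
    | node l n hA hsome hall =>
      obtain ⟨e, he⟩ := Option.isSome_iff_exists.mp hsome
      have ht' : AEval T₁.Γ T₁.Δ ⟨x, pre ++ [f]⟩ (e f) := by
        unfold AEval at ht ⊢
        rw [aevalFields_append, ht]
        simp [aevalFields, he]
      have hvpath : EvalPath ρ h ⟨x, (pre ++ [f]) ++ fs⟩ v := by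
        simpa [List.append_assoc] using hv
      have := ih x (pre ++ [f]) ⟨e f, ht'⟩ v hvpath
      simpa [List.append_assoc] using this

lemma auxInterp_bot {ρ : Env} {h : Heap} {A : Set Loc} {Γ : Var → BaseType} {Δ : Graph}
    {v : Val} (ha : AuxInterp ρ h A Γ Δ v BaseType.bot) : v = Val.null := by
  cases ha; rfl

/-- Transfer of the auxiliary interpretation along value sub-typing. -/
lemma vsub_aux {ρ : Env} {h : Heap} {A : Set Loc} {T₁ T₂ : Ty} {σ : Node → Option Node}
    (hsub : SubtypeVia T₁ T₂ σ) {v : Val} {t₁ t₂ : BaseType}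
    (hvs : VSub σ t₁ t₂) (ha : AuxInterp ρ h A T₁.Γ T₁.Δ v t₁) :
    AuxInterp ρ h A T₂.Γ T₂.Δ v t₂ := by
  cases hvs with
  | bot t =>
    rw [auxInterp_bot ha]
    exact AuxInterp.null _
  | top ht => exact AuxInterp.top v
  | nodeTop hσ => exact AuxInterp.top v
  | topOut =>
    cases ha with
    | null _ => exact AuxInterp.null _
    | topOut l hr => exact AuxInterp.topOut l hr
  | @node n n' hσ =>
    cases ha with
    | null _ => exact AuxInterp.null _
    | node l _ hA hs hall =>
      refine AuxInterp.node l n' hA (hsub.st1 n n' hs hσ) ?_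
      intro π hπ
      obtain ⟨t₂', hvs', hae₂⟩ := hsub.st2 _ π (hall π hπ)
      cases hvs' with
      | top hne => exact absurd rfl (hne n)
      | nodeTop hσ' => rw [hσ] at hσ'; cases hσ'
      | @node _ n'' hσ' =>
        rw [hσ] at hσ'
        injection hσ' with hnn
        rw [hnn]; exact hae₂

/-- Logical soundness of subtyping: type interpretation is monotone along ⊑. -/
theorem interpretation_monotone (T₁ T₂ : Ty) (ρ : Env) (h : Heap) (A : Set Loc)
    (hsub : TySub T₁ T₂) (hint : Interp ρ h A T₁) :
    Interp ρ h A T₂ := by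
  obtain ⟨σ, hsub⟩ := hsub
  have key : ∀ (π : Path) (v : Val), EvalPath ρ h π v → ∃ t, AEval T₁.Γ T₁.Δ π t := by
    intro π v hv
    obtain ⟨x, fs⟩ := π
    have hroot : ∃ t, AEval T₁.Γ T₁.Δ ⟨x, []⟩ t := ⟨T₁.Γ x, by simp [AEval, aevalFields]⟩
    simpa using exists_aeval hint fs x [] hroot v (by simpa using hv)
  constructor
  · intro π t₂ v hae₂ hev
    obtain ⟨t₁, hae₁⟩ := key π v hev
    obtain ⟨t₂', hvs, hae₂'⟩ := hsub.st2 t₁ π hae₁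
    have ht : t₂' = t₂ := by
      unfold AEval at hae₂ hae₂'
      rw [hae₂'] at hae₂
      exact (Option.some.injEq _ _ ▸ hae₂)
    subst ht
    exact vsub_aux hsub hvs (hint.paths π t₁ v hae₁ hev)
  · intro n₂ hn₂ π π' l l' h1 h2 he1 he2
    obtain ⟨n₁, hn₁, hiff⟩ := hsub.st3 n₂ hn₂
    have step : ∀ (π : Path) (l : Loc), AEval T₂.Γ T₂.Δ π (BaseType.node n₂) →
        EvalPath ρ h π (Val.loc l) → AEval T₁.Γ T₁.Δ π (BaseType.node n₁) := by
      intro π l hae₂ hev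
      obtain ⟨t₁, hae₁⟩ := key π (Val.loc l) hev
      obtain ⟨t₂', hvs, hae₂'⟩ := hsub.st2 t₁ π hae₁
      have ht : t₂' = BaseType.node n₂ := by
        unfold AEval at hae₂ hae₂'
        rw [hae₂'] at hae₂
        exact (Option.some.injEq _ _ ▸ hae₂)
      subst ht
      cases hvs with
      | bot _ =>
        have := auxInterp_bot (hint.paths π BaseType.bot _ hae₁ hev)
        cases this
      | @node n _ hσ =>
        have haux := hint.paths π (BaseType.node n) _ hae₁ hev
        have hsome : (T₁.Δ n).isSome := by cases haux with | node _ _ _ hs _ => exact hs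
        have := (hiff n).mp ⟨hsome, hσ⟩
        rwa [this] at hae₁
    exact hint.strong n₁ hn₁ π π' l l' (step π l h1 he1) (step π' l' h2 he2) he1 he2

end SecureClones
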